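/- arXiv:2104.06868 — 2 statements merged into one kernel-verified Lean document; each statement's English description precedes it below -/
import Mathlib

section
/- Let Ω be a set and let H be a linear subspace of the real-valued functions on Ω that contains all constant functions. Let Ê : H → ℝ be a sublinear expectation, i.e. (i) Ê(X) ≤ Ê(Y) whenever X ≤ Y pointwise, (ii) Ê(c) = c for every constant function c, (iii) Ê(X + Y) ≤ Ê(X) + Ê(Y), and (iv) Ê(λX) = λÊ(X) for every λ ≥ 0. Then for every X ∈ H, Ê(X) = sup { E(X) : E : H → ℝ linear and E(Y) ≤ Ê(Y) for all Y ∈ H }, and this supremum is attained: there exists a linear functional E₀ : H → ℝ with E₀ ≤ Ê on H and E₀(X) = Ê(X). -/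
/-- Representation theorem for sublinear expectations: a sublinear expectation
`E` on a linear subspace `H` of real-valued functions on `Ω` containing the
constants is, at every `X ∈ H`, the (attained) supremum of the linear
functionals on `H` dominated by `E`. -/
theorem sublinear_expectation_representation
    {Ω : Type*} (H : Submodule ℝ (Ω → ℝ))
    (hconst : ∀ c : ℝ, (fun _ : Ω => c) ∈ H)
    (E : H → ℝ)
    (hmono : ∀ X Y : H, (X : Ω → ℝ) ≤ (Y : Ω → ℝ) → E X ≤ E Y)
    (hconstE : ∀ c : ℝ, E ⟨fun _ : Ω => c, hconst c⟩ = c)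
    (hsub : ∀ X Y : H, E (X + Y) ≤ E X + E Y)
    (hpos : ∀ (l : ℝ) (X : H), 0 ≤ l → E (l • X) = l * E X) :
    ∀ X : H,
      IsGreatest {r : ℝ | ∃ L : H →ₗ[ℝ] ℝ, (∀ Y : H, L Y ≤ E Y) ∧ L X = r} (E X) := by
  intro X
  have hE0 : E 0 = 0 := by
    have := hpos 0 0 le_rfl
    simpa using this
  have Nhom : ∀ c : ℝ, 0 < c → ∀ x : H, E (c • x) = c * E x :=
    fun c hc x => hpos c x hc.le
  have hneg : ∀ (c : ℝ) (x : H), c * E x ≤ E (c • x) := by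
    intro c x
    rcases le_or_gt 0 c with hc | hc
    · rw [hpos c x hc]
    · have h1 : E (c • x) + E ((-c) • x) ≥ 0 := by
        have := hsub (c • x) ((-c) • x)
        have h0 : c • x + (-c) • x = 0 := by
          rw [← add_smul]; simp
        rw [h0, hE0] at this
        linarith
      have h2 : E ((-c) • x) = -c * E x := hpos (-c) x (by linarith)
      nlinarith
  constructor
  · -- membership: existence of a dominated linear functional attaining E X
    by_cases hX : X = 0
    · -- use Hahn-Banach with trivial domain
      obtain ⟨g, _, hg⟩ := exists_extension_of_le_sublinear
        (LinearPMap.mkSpanSingleton' (0 : H) (0 : ℝ)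
          (fun c _ => by simp)) E Nhom hsub
        (by
          rintro ⟨y, hy⟩
          rcases Submodule.mem_span_singleton.1 hy with ⟨c, hc⟩
          have : y = 0 := by rw [← hc]; simp
          subst this
          rw [show (⟨(0 : H), hy⟩ : (LinearPMap.mkSpanSingleton' (0 : H) (0 : ℝ)
              (fun c _ => by simp)).domain) = ⟨(0 : ℝ) • (0 : H), by simpa using hy⟩ from
            Subtype.ext (by simp), LinearPMap.mkSpanSingleton'_apply]
          simp [hE0])
      refine ⟨g, hg, ?_⟩
      rw [hX]
      simp [hE0]
    · obtain ⟨g, hgeq, hg⟩ := exists_extension_of_le_sublinear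
        (LinearPMap.mkSpanSingleton X (E X) hX) E Nhom hsub
        (by
          rintro ⟨y, hy⟩
          rcases Submodule.mem_span_singleton.1 hy with ⟨c, hc⟩
          have hy' : y = c • X := hc.symm
          subst hy'
          rw [LinearPMap.mkSpanSingleton'_apply]
          simpa using hneg c X)
      refine ⟨g, hg, ?_⟩
      have := hgeq ⟨X, Submodule.mem_span_singleton_self X⟩
      rw [this, LinearPMap.mkSpanSingleton_apply]
  · rintro r ⟨L, hL, rfl⟩
    exact hL X
end

section
/- Let d ≥ 1 and let S_d denote the space of real symmetric d × d matrices. Let G : S_d → ℝ be subadditive (G(A + B) ≤ G(A) + G(B)), positively homogeneous (G(λA) = λG(A) for all λ ≥ 0), and monotone with respect to the Loewner order (if B − A is positive semidefinite then G(A) ≤ G(B)). Then there exists a nonempty, bounded, closed, convex set Γ of positive semidefinite symmetric d × d real matrices such that G(A) = (1/2) · sup_{γ ∈ Γ} tr(γ A) for every A ∈ S_d, and for each A the supremum is attained by some γ ∈ Γ. -/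
open Matrix

namespace GRepAux

variable {d : ℕ}

/-- The submodule of symmetric matrices. -/
def symMod (d : ℕ) : Submodule ℝ (Matrix (Fin d) (Fin d) ℝ) where
  carrier := {A | A.IsSymm}
  add_mem' ha hb := ha.add hb
  zero_mem' := Matrix.isSymm_zero
  smul_mem' c A hA := hA.smul c

lemma trace_mul_eq (γ B : Matrix (Fin d) (Fin d) ℝ) :
    (γ * B).trace = ∑ i, ∑ j, γ i j * B j i := by
  simp [Matrix.trace, Matrix.mul_apply, Matrix.diag]

/-- symmetrized basis matrices -/
noncomputable def M (i j : Fin d) : Matrix (Fin d) (Fin d) ℝ :=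
  Matrix.single i j 1 + Matrix.single j i 1

lemma M_isSymm (i j : Fin d) : (M i j).IsSymm := by
  unfold Matrix.IsSymm M
  rw [transpose_add]
  ext k l
  simp [Matrix.single, add_comm, and_comm]

lemma M_symm (i j : Fin d) : M i j = M j i := by
  unfold M; exact add_comm _ _

lemma sum_decomp (B : Matrix (Fin d) (Fin d) ℝ) (hB : B.IsSymm) :
    ∑ i, ∑ j, B i j • M i j = (2:ℝ) • B := by
  ext k l
  have hBs : ∀ a b : Fin d, B a b = B b a := fun a b => by
    conv_lhs => rw [← hB]
    rfl
  simp only [Matrix.sum_apply, Matrix.smul_apply, M, Matrix.add_apply,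
    Matrix.single, Matrix.of_apply, smul_eq_mul, mul_add, mul_ite, mul_one, mul_zero]
  rw [Finset.sum_congr rfl (fun i _ => Finset.sum_add_distrib), Finset.sum_add_distrib]
  have h1 : ∑ i, ∑ j, (if i = k ∧ j = l then B i j else 0) = B k l := by
    simp [Finset.sum_ite_eq, ite_and]
  have h2 : ∑ i, ∑ j, (if j = k ∧ i = l then B i j else 0) = B l k := by
    simp [Finset.sum_ite_eq, ite_and, Finset.sum_comm]
  rw [h1, h2, hBs l k]
  show _ = (2:ℝ) * B k l
  ring

lemma trace_mul_M (γ : Matrix (Fin d) (Fin d) ℝ) (hγ : γ.IsSymm) (i j : Fin d) :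
    (γ * M i j).trace = 2 * γ i j := by
  have hγs : ∀ a b : Fin d, γ a b = γ b a := fun a b =>
    (congrFun (congrFun hγ a) b).symm.trans (Matrix.transpose_apply γ a b)
  rw [trace_mul_eq]
  simp only [M, Matrix.add_apply, Matrix.single, Matrix.of_apply, mul_add,
    mul_ite, mul_one, mul_zero]
  rw [Finset.sum_congr rfl (fun k _ => Finset.sum_add_distrib), Finset.sum_add_distrib]
  have h1 : ∑ k : Fin d, ∑ l : Fin d, (if i = l ∧ j = k then γ k l else 0) = γ j i := by
    simp [Finset.sum_ite_eq, ite_and]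
  have h2 : ∑ k : Fin d, ∑ l : Fin d, (if j = l ∧ i = k then γ k l else 0) = γ i j := by
    simp [Finset.sum_ite_eq, ite_and]
  rw [h1, h2, hγs j i]
  ring

lemma gammaSet_closed (G : Matrix (Fin d) (Fin d) ℝ → ℝ) :
    IsClosed {γ : Matrix (Fin d) (Fin d) ℝ |
      γ.IsSymm ∧ γ.PosSemidef ∧ ∀ A, A.IsSymm → (γ * A).trace ≤ 2 * G A} := by
  have hset : {γ : Matrix (Fin d) (Fin d) ℝ |
      γ.IsSymm ∧ γ.PosSemidef ∧ ∀ A, A.IsSymm → (γ * A).trace ≤ 2 * G A} =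
      {γ : Matrix (Fin d) (Fin d) ℝ | γᵀ = γ} ∩
      ((⋂ x : Fin d → ℝ, {γ : Matrix (Fin d) (Fin d) ℝ | 0 ≤ dotProduct (star x) (γ *ᵥ x)}) ∩
        (⋂ A ∈ {A : Matrix (Fin d) (Fin d) ℝ | A.IsSymm},
          {γ : Matrix (Fin d) (Fin d) ℝ | (γ * A).trace ≤ 2 * G A})) := by
    ext γ
    simp only [Set.mem_setOf_eq, Set.mem_inter_iff, Set.mem_iInter]
    constructor
    · rintro ⟨h1, h2, h3⟩
      exact ⟨h1, fun x => h2.dotProduct_mulVec_nonneg x, fun A hA => h3 A hA⟩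
    · rintro ⟨h1, h2, h3⟩
      refine ⟨h1, Matrix.PosSemidef.of_dotProduct_mulVec_nonneg ?_ h2, h3⟩
      rw [Matrix.IsHermitian, Matrix.conjTranspose_eq_transpose_of_trivial]
      exact h1
  rw [hset]
  refine (isClosed_eq (Continuous.matrix_transpose continuous_id) continuous_id).inter
    (IsClosed.inter ?_ ?_)
  · exact isClosed_iInter fun x => isClosed_le continuous_const
      (Continuous.dotProduct continuous_const
        (Continuous.matrix_mulVec continuous_id continuous_const))
  · exact isClosed_biInter fun A hA => isClosed_le
      (Continuous.matrix_trace (Continuous.matrix_mul continuous_id continuous_const))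
      continuous_const

section Key

variable (G : Matrix (Fin d) (Fin d) ℝ → ℝ)
  (hsub : ∀ A B : Matrix (Fin d) (Fin d) ℝ,
    A.IsSymm → B.IsSymm → G (A + B) ≤ G A + G B)
  (hpos : ∀ (A : Matrix (Fin d) (Fin d) ℝ) (l : ℝ),
    A.IsSymm → 0 ≤ l → G (l • A) = l * G A)
  (hmono : ∀ A B : Matrix (Fin d) (Fin d) ℝ,
    A.IsSymm → B.IsSymm → (B - A).PosSemidef → G A ≤ G B)

include hpos in
lemma G_zero : G 0 = 0 := by
  have := hpos 0 0 Matrix.isSymm_zero le_rfl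
  simpa using this

include hsub hpos in
lemma G_neg_smul_le (t : ℝ) (A : Matrix (Fin d) (Fin d) ℝ) (hA : A.IsSymm) (ht : t < 0) :
    t * G A ≤ G (t • A) := by
  have h1 : G (t • A + (-t) • A) ≤ G (t • A) + G ((-t) • A) :=
    hsub _ _ (hA.smul t) (hA.smul (-t))
  have h2 : t • A + (-t) • A = 0 := by
    rw [← add_smul]; simp
  have h3 : G ((-t) • A) = (-t) * G A := hpos A (-t) hA (by linarith)
  rw [h2, G_zero G hpos] at h1
  rw [h3] at h1
  linarith

include hsub hpos hmono in
lemma exists_gamma (A₀ : Matrix (Fin d) (Fin d) ℝ) (hA₀ : A₀.IsSymm) (hA₀0 : A₀ ≠ 0) :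
    ∃ γ : Matrix (Fin d) (Fin d) ℝ, γ.IsSymm ∧ γ.PosSemidef ∧
      (∀ A, A.IsSymm → (γ * A).trace ≤ 2 * G A) ∧ (γ * A₀).trace = 2 * G A₀ := by
  classical
  set N : symMod d → ℝ := fun x => G x.1 with hN
  set x₀ : symMod d := ⟨A₀, hA₀⟩ with hx₀def
  have hx₀ : x₀ ≠ 0 := fun h => hA₀0 (congrArg Subtype.val h)
  set f := LinearPMap.mkSpanSingleton (K := ℝ) (L := ℝ) (σ := RingHom.id ℝ) x₀ (G A₀) hx₀ with hfdef
  have hf : ∀ x : f.domain, f x ≤ N x := by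
    rintro ⟨xv, hxv⟩
    obtain ⟨t, ht⟩ := Submodule.mem_span_singleton.mp hxv
    induction ht
    have happ : f ⟨t • x₀, hxv⟩ = t • (G A₀) := LinearPMap.mkSpanSingleton'_apply _ _ _ t _
    rw [happ]
    have hval : N (t • x₀) = G (t • A₀) := rfl
    rw [hval, smul_eq_mul]
    rcases le_or_gt 0 t with h | h
    · rw [hpos A₀ t hA₀ h]
    · exact G_neg_smul_le G hsub hpos t A₀ hA₀ h
  obtain ⟨g, hgf, hgN⟩ := exists_extension_of_le_sublinear f N
    (fun c hc x => hpos x.1 c x.2 hc.le)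
    (fun x y => hsub x.1 y.1 x.2 y.2)
    hf
  have hgx₀ : g x₀ = G A₀ := by
    have := hgf ⟨x₀, Submodule.mem_span_singleton_self x₀⟩
    rw [this]
    exact LinearPMap.mkSpanSingleton_apply ℝ ℝ (σ := RingHom.id ℝ) hx₀ (G A₀)
  -- the candidate matrix
  set γ : Matrix (Fin d) (Fin d) ℝ := Matrix.of fun i j => g ⟨M i j, M_isSymm i j⟩ with hγ
  have hγsymm : γ.IsSymm := by
    ext i j
    show γ j i = γ i j
    simp only [hγ, Matrix.of_apply]
    congr 1
    exact Subtype.ext (M_symm j i)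
  have key : ∀ B (hB : B.IsSymm), (γ * B).trace = 2 * g ⟨B, hB⟩ := by
    intro B hB
    have hBs : ∀ a b : Fin d, B a b = B b a := fun a b =>
      (congrFun (congrFun hB a) b).symm.trans (Matrix.transpose_apply B a b)
    rw [trace_mul_eq]
    have h1 : ∀ i j : Fin d, γ i j * B j i = g ((B i j) • (⟨M i j, M_isSymm i j⟩ : symMod d)) := by
      intro i j
      rw [g.map_smul, smul_eq_mul, hγ]
      simp only [Matrix.of_apply]
      rw [hBs j i, mul_comm]
    calc ∑ i, ∑ j, γ i j * B j i
        = ∑ i, ∑ j, g ((B i j) • (⟨M i j, M_isSymm i j⟩ : symMod d)) := by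
          exact Finset.sum_congr rfl fun i _ => Finset.sum_congr rfl fun j _ => h1 i j
      _ = g (∑ i, ∑ j, (B i j) • (⟨M i j, M_isSymm i j⟩ : symMod d)) := by
          rw [map_sum]
          exact Finset.sum_congr rfl fun i _ => (map_sum g _ _).symm
      _ = g ((2:ℝ) • (⟨B, hB⟩ : symMod d)) := by
          congr 1
          apply Subtype.ext
          push_cast
          show ∑ i, ∑ j, B i j • M i j = ((2:ℝ) • (⟨B, hB⟩ : symMod d) : symMod d).1
          rw [sum_decomp B hB]
          rfl
      _ = 2 * g ⟨B, hB⟩ := by rw [g.map_smul, smul_eq_mul]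
  have hg_nonneg : ∀ (B : Matrix (Fin d) (Fin d) ℝ) (hB : B.IsSymm),
      B.PosSemidef → 0 ≤ g ⟨B, hB⟩ := by
    intro B hB hBpsd
    have h1 : g (-(⟨B, hB⟩ : symMod d)) ≤ N (-(⟨B, hB⟩ : symMod d)) := hgN _
    have h2 : N (-(⟨B, hB⟩ : symMod d)) = G (-B) := rfl
    have h3 : G (-B) ≤ G 0 := by
      apply hmono (-B) 0 hB.neg Matrix.isSymm_zero
      simpa using hBpsd
    rw [map_neg, h2] at h1
    rw [G_zero G hpos] at h3
    linarith
  refine ⟨γ, hγsymm, ?_, ?_, ?_⟩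
  · refine Matrix.PosSemidef.of_dotProduct_mulVec_nonneg ?_ ?_
    · rw [Matrix.IsHermitian, Matrix.conjTranspose_eq_transpose_of_trivial]
      exact hγsymm
    · intro x
      have hB : (vecMulVec x x).IsSymm := by
        ext i j
        simp [Matrix.vecMulVec, mul_comm]
      have hBpsd : (vecMulVec x x).PosSemidef := by
        refine Matrix.PosSemidef.of_dotProduct_mulVec_nonneg ?_ ?_
        · rw [Matrix.IsHermitian, Matrix.conjTranspose_eq_transpose_of_trivial]
          exact hB
        · intro y
          have heq : dotProduct (star y) ((vecMulVec x x) *ᵥ y)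
              = (∑ i, x i * y i) * (∑ j, x j * y j) := by
            simp only [Matrix.vecMulVec, Matrix.mulVec, dotProduct, Matrix.of_apply,
              star_trivial]
            rw [Finset.sum_mul_sum]
            refine Finset.sum_congr rfl fun i _ => ?_
            rw [Finset.mul_sum]
            exact Finset.sum_congr rfl fun j _ => by ring
          rw [heq]
          exact mul_self_nonneg _
      have hquad : dotProduct (star x) (γ *ᵥ x) = (γ * vecMulVec x x).trace := by
        rw [trace_mul_eq]
        simp only [dotProduct, Matrix.mulVec, Matrix.vecMulVec, Matrix.of_apply,
          star_trivial]
        refine Finset.sum_congr rfl fun i _ => ?_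
        rw [Finset.mul_sum]
        exact Finset.sum_congr rfl fun j _ => by ring
      rw [hquad, key _ hB]
      have := hg_nonneg _ hB hBpsd
      linarith
  · intro A hA
    rw [key A hA]
    have := hgN ⟨A, hA⟩
    have h2 : N ⟨A, hA⟩ = G A := rfl
    rw [h2] at this
    linarith
  · rw [key A₀ hA₀]
    rw [hgx₀]

end Key

end GRepAux

/-- Representation of a monotone, subadditive, positively homogeneous function
`G` on the space of real symmetric `d × d` matrices (with the Loewner order) as
`G(A) = (1/2) · sup_{γ ∈ Γ} tr(γ A)` for a nonempty bounded closed convex set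
`Γ` of positive semidefinite symmetric matrices, the supremum being attained. -/
theorem G_function_representation
    (d : ℕ) (hd : 1 ≤ d)
    (G : Matrix (Fin d) (Fin d) ℝ → ℝ)
    (hsub : ∀ A B : Matrix (Fin d) (Fin d) ℝ,
      A.IsSymm → B.IsSymm → G (A + B) ≤ G A + G B)
    (hpos : ∀ (A : Matrix (Fin d) (Fin d) ℝ) (l : ℝ),
      A.IsSymm → 0 ≤ l → G (l • A) = l * G A)
    (hmono : ∀ A B : Matrix (Fin d) (Fin d) ℝ,
      A.IsSymm → B.IsSymm → (B - A).PosSemidef → G A ≤ G B) :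
    ∃ Γ : Set (Matrix (Fin d) (Fin d) ℝ),
      Γ.Nonempty ∧
      (∃ C : ℝ, ∀ γ ∈ Γ, ∀ i j, |γ i j| ≤ C) ∧
      IsClosed Γ ∧
      Convex ℝ Γ ∧
      (∀ γ ∈ Γ, γ.IsSymm ∧ γ.PosSemidef) ∧
      (∀ A : Matrix (Fin d) (Fin d) ℝ, A.IsSymm →
        IsGreatest {r : ℝ | ∃ γ ∈ Γ, r = (1 / 2) * (γ * A).trace} (G A)) := by
  classical
  set Γ : Set (Matrix (Fin d) (Fin d) ℝ) :=
    {γ | γ.IsSymm ∧ γ.PosSemidef ∧ ∀ A, A.IsSymm → (γ * A).trace ≤ 2 * G A} with hΓ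
  have hone : (1 : Matrix (Fin d) (Fin d) ℝ) ≠ 0 := by
    intro h
    have := congrFun (congrFun h ⟨0, hd⟩) ⟨0, hd⟩
    simp [Matrix.one_apply] at this
  obtain ⟨γ₁, hγ₁s, hγ₁p, hγ₁le, -⟩ :=
    GRepAux.exists_gamma G hsub hpos hmono 1 Matrix.isSymm_one hone
  have hγ₁Γ : γ₁ ∈ Γ := ⟨hγ₁s, hγ₁p, hγ₁le⟩
  have hmem : ∀ A : Matrix (Fin d) (Fin d) ℝ, A.IsSymm →
      G A ∈ {r : ℝ | ∃ γ ∈ Γ, r = (1 / 2) * (γ * A).trace} := by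
    intro A hA
    by_cases hA0 : A = 0
    · refine ⟨γ₁, hγ₁Γ, ?_⟩
      subst hA0
      rw [GRepAux.G_zero G hpos]
      simp
    · obtain ⟨γ, hs, hp, hle, heq⟩ := GRepAux.exists_gamma G hsub hpos hmono A hA hA0
      exact ⟨γ, ⟨hs, hp, hle⟩, by rw [heq]; ring⟩
  refine ⟨Γ, ⟨γ₁, hγ₁Γ⟩, ?_, ?_, ?_, fun γ hγ => ⟨hγ.1, hγ.2.1⟩, ?_⟩
  · -- bounded
    refine ⟨∑ p : Fin d × Fin d, (|G (GRepAux.M p.1 p.2)| + |G (-GRepAux.M p.1 p.2)|), ?_⟩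
    intro γ hγ i j
    have h1 : (γ * GRepAux.M i j).trace ≤ 2 * G (GRepAux.M i j) :=
      hγ.2.2 _ (GRepAux.M_isSymm i j)
    have h2 : (γ * -GRepAux.M i j).trace ≤ 2 * G (-GRepAux.M i j) :=
      hγ.2.2 _ ((GRepAux.M_isSymm i j).neg)
    rw [GRepAux.trace_mul_M γ hγ.1 i j] at h1
    rw [Matrix.mul_neg, Matrix.trace_neg, GRepAux.trace_mul_M γ hγ.1 i j] at h2
    have hb : |γ i j| ≤ |G (GRepAux.M i j)| + |G (-GRepAux.M i j)| := by
      rw [abs_le]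
      constructor
      · nlinarith [neg_abs_le (G (-GRepAux.M i j)), abs_nonneg (G (GRepAux.M i j)),
          le_abs_self (G (-GRepAux.M i j))]
      · nlinarith [le_abs_self (G (GRepAux.M i j)), abs_nonneg (G (-GRepAux.M i j))]
    refine hb.trans ?_
    exact Finset.single_le_sum
      (f := fun p : Fin d × Fin d => |G (GRepAux.M p.1 p.2)| + |G (-GRepAux.M p.1 p.2)|)
      (fun p _ => by positivity) (Finset.mem_univ (i, j))
  · exact GRepAux.gammaSet_closed G
  · -- convex
    rintro γa hγa γb hγb a b ha hb hab
    have qa := hγa.2.1.dotProduct_mulVec_nonneg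
    have qb := hγb.2.1.dotProduct_mulVec_nonneg
    have hsymm : (a • γa + b • γb).IsSymm := (hγa.1.smul a).add (hγb.1.smul b)
    refine ⟨hsymm, Matrix.PosSemidef.of_dotProduct_mulVec_nonneg ?_ ?_, ?_⟩
    · rw [Matrix.IsHermitian, Matrix.conjTranspose_eq_transpose_of_trivial]
      exact hsymm
    · intro x
      have : dotProduct (star x) ((a • γa + b • γb) *ᵥ x)
          = a * dotProduct (star x) (γa *ᵥ x) + b * dotProduct (star x) (γb *ᵥ x) := by
        rw [Matrix.add_mulVec, Matrix.smul_mulVec, Matrix.smul_mulVec,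
          dotProduct_add, dotProduct_smul, dotProduct_smul]
        simp [smul_eq_mul]
      rw [this]
      exact add_nonneg (mul_nonneg ha (qa x)) (mul_nonneg hb (qb x))
    · intro A hA
      have h1 := hγa.2.2 A hA
      have h2 := hγb.2.2 A hA
      have : ((a • γa + b • γb) * A).trace = a * (γa * A).trace + b * (γb * A).trace := by
        rw [Matrix.add_mul, Matrix.smul_mul, Matrix.smul_mul, Matrix.trace_add,
          Matrix.trace_smul, Matrix.trace_smul]
        simp [smul_eq_mul]
      rw [this]
      calc a * (γa * A).trace + b * (γb * A).trace
          ≤ a * (2 * G A) + b * (2 * G A) :=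
            add_le_add (mul_le_mul_of_nonneg_left h1 ha) (mul_le_mul_of_nonneg_left h2 hb)
        _ = 2 * G A := by rw [← add_mul, hab, one_mul]
  · intro A hA
    refine ⟨hmem A hA, ?_⟩
    rintro r ⟨γ, hγ, rfl⟩
    have := hγ.2.2 A hA
    linarith
end
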